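/- Suppose ϑ = ν ⊗ λ, where ν is the exponential distribution on [0,∞) with Lebesgue density x ↦ α e^{−αx} and λ is any Borel probability measure on ℝ. Then for every z > 0 and every y ∈ ℝ, ϑ_e^z([0,∞) × (−∞,y]) = ∫_{−∞}^0 λ((−∞, y − u]) · α e^{(α/z)u} du; that is, the second-coordinate marginal of ϑ_e^z is the convolution of λ with the measure of total mass z on (−∞,0] having density u ↦ α e^{(α/z)u}. -/

import Mathlib

open MeasureTheory Set Filter Topology

noncomputable section

/-- The right half-plane `ℍ₊ = [0,∞) × ℝ`, as a subset of `ℝ × ℝ`. -/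
def Hplus : Set (ℝ × ℝ) := {p | 0 ≤ p.1}

/-- Translation of a set: `B + w = {b + w : b ∈ B}`. -/
def shiftSet (B : Set (ℝ × ℝ)) (w : ℝ × ℝ) : Set (ℝ × ℝ) := (fun b => b + w) '' B

/-- The improper exponential integral. -/
lemma aux_exp_integral (α : ℝ) (hα : 0 < α) (a : ℝ) :
    ∫ x in Ioi a, α * Real.exp (-(α * x)) = Real.exp (-(α * a)) := by
  have hint : IntegrableOn (fun x : ℝ => α * Real.exp (-(α * x))) (Ioi a) := by
    simpa [neg_mul, IntegrableOn] using (exp_neg_integrableOn_Ioi a hα).const_mul α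
  have htend : Tendsto (fun x : ℝ => -Real.exp (-(α * x))) atTop (𝓝 (-0)) := by
    apply Tendsto.neg
    have h1 : Tendsto (fun x : ℝ => α * x) atTop atTop :=
      Tendsto.const_mul_atTop hα tendsto_id
    exact Real.tendsto_exp_neg_atTop_nhds_zero.comp h1
  have h := integral_Ioi_of_hasDerivAt_of_tendsto
    (f := fun x => -Real.exp (-(α * x))) (f' := fun x => α * Real.exp (-(α * x))) (a := a)
    (Continuous.continuousWithinAt (by continuity))
    (fun x _ => ProbabilityTheory.hasDerivAt_neg_exp_mul_exp) hint htend
  rw [h]; ring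

theorem stmt_11 (α : ℝ) (hα : 0 < α)
    (ν : Measure ℝ)
    (hν : ν = volume.withDensity fun x =>
      if 0 ≤ x then ENNReal.ofReal (α * Real.exp (-(α * x))) else 0)
    (lam : Measure ℝ) [IsProbabilityMeasure lam]
    (ϑ : Measure (ℝ × ℝ)) (hϑprod : ϑ = ν.prod lam)
    (z : ℝ) (hz : 0 < z) (τ : Measure (ℝ × ℝ)) [IsFiniteMeasure τ]
    (hτsupp : τ {p : ℝ × ℝ | p.1 < 0} = 0)
    (hτ : ∀ B : Set (ℝ × ℝ), MeasurableSet B → B ⊆ Hplus →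
      τ B = ENNReal.ofReal α * ∫⁻ u in Ioi (0 : ℝ), ϑ (shiftSet B (u / z, u))) :
    (∀ y : ℝ,
      τ (Ici (0 : ℝ) ×ˢ Iic y)
        = ∫⁻ u in Iic (0 : ℝ), lam (Iic (y - u)) * ENNReal.ofReal (α * Real.exp (α / z * u))) ∧
    τ.map Prod.snd
      = ((lam.prod (volume.withDensity fun u =>
            if u ≤ 0 then ENNReal.ofReal (α * Real.exp (α / z * u)) else 0)).map
          fun p : ℝ × ℝ => p.1 + p.2) := by
  -- `ν` of a right-infinite interval
  have hν_Ici : ∀ a : ℝ, 0 ≤ a → ν (Ici a) = ENNReal.ofReal (Real.exp (-(α * a))) := by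
    intro a ha
    rw [hν, withDensity_apply _ measurableSet_Ici,
      setLIntegral_congr (Ioi_ae_eq_Ici (a := a)).symm]
    have h1 : ∫⁻ x in Ioi a,
        (if 0 ≤ x then ENNReal.ofReal (α * Real.exp (-(α * x))) else 0) ∂volume
        = ∫⁻ x in Ioi a, ENNReal.ofReal (α * Real.exp (-(α * x))) ∂volume := by
      refine setLIntegral_congr_fun measurableSet_Ioi (fun x hx => ?_)
      rw [if_pos (ha.trans (le_of_lt hx))]
    have hint : IntegrableOn (fun x : ℝ => α * Real.exp (-(α * x))) (Ioi a) := by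
      simpa [neg_mul, IntegrableOn] using (exp_neg_integrableOn_Ioi a hα).const_mul α
    rw [h1, ← ofReal_integral_eq_lintegral_ofReal hint
      (ae_of_all _ fun x => by positivity), aux_exp_integral α hα a]
  -- the shifted rectangle
  have hshift : ∀ (y u : ℝ),
      shiftSet (Ici (0:ℝ) ×ˢ Iic y) (u / z, u) = Ici (u/z) ×ˢ Iic (y + u) := by
    intro y u
    ext p
    simp only [shiftSet, Set.mem_image, mem_prod, mem_Ici, mem_Iic]
    constructor
    · rintro ⟨b, ⟨hb1, hb2⟩, rfl⟩
      simp only [Prod.fst_add, Prod.snd_add]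
      exact ⟨by linarith, by linarith⟩
    · rintro ⟨h1, h2⟩
      refine ⟨p - (u / z, u), ⟨?_, ?_⟩, by simp⟩
      · simpa [sub_nonneg] using h1
      · simpa [sub_le_iff_le_add] using h2
  -- the key formula
  have hmain : ∀ y : ℝ, τ (Ici (0 : ℝ) ×ˢ Iic y)
      = ∫⁻ u in Iic (0 : ℝ), lam (Iic (y - u)) * ENNReal.ofReal (α * Real.exp (α / z * u)) := by
    intro y
    rw [hτ _ (measurableSet_Ici.prod measurableSet_Iic) (fun p hp => hp.1)]
    have h2 : ∫⁻ u in Ioi (0:ℝ), ϑ (shiftSet (Ici (0:ℝ) ×ˢ Iic y) (u / z, u))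
        = ∫⁻ u in Ioi (0:ℝ),
            ENNReal.ofReal (Real.exp (-(α * (u / z)))) * lam (Iic (y + u)) := by
      refine setLIntegral_congr_fun measurableSet_Ioi (fun u hu => ?_)
      rw [hshift, hϑprod, Measure.prod_prod,
        hν_Ici _ (div_nonneg (le_of_lt hu) (le_of_lt hz))]
    rw [h2]
    -- substitution u ↦ -u
    have hemb : MeasurableEmbedding (fun x : ℝ => -x) :=
      (Homeomorph.neg ℝ).measurableEmbedding
    have hmp : MeasurePreserving (fun x : ℝ => -x) (volume : Measure ℝ) volume :=
      Measure.measurePreserving_neg _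
    have hsub := hmp.setLIntegral_comp_emb hemb
      (fun u => ENNReal.ofReal (Real.exp (-(α * (-u / z)))) * lam (Iic (y + -u))) (Ioi 0)
    have himg : (fun x : ℝ => -x) '' Ioi 0 = Iio 0 := by
      rw [Set.image_neg_eq_neg, Set.neg_Ioi, neg_zero]
    rw [himg] at hsub
    have hagree : ∫⁻ u in Ioi (0:ℝ),
        ENNReal.ofReal (Real.exp (-(α * (u / z)))) * lam (Iic (y + u))
        = ∫⁻ u in Ioi (0:ℝ),
          ENNReal.ofReal (Real.exp (-(α * (- -u / z)))) * lam (Iic (y + - -u)) := by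
      refine setLIntegral_congr_fun measurableSet_Ioi (fun u _ => ?_)
      simp
    rw [hagree, hsub, setLIntegral_congr (Iio_ae_eq_Iic (a := (0:ℝ)))]
    rw [← lintegral_const_mul' _ _ ENNReal.ofReal_ne_top]
    refine setLIntegral_congr_fun measurableSet_Iic (fun u _ => ?_)
    have he : -(α * (-u / z)) = α / z * u := by field_simp
    rw [he, show y + -u = y - u by ring, ← mul_assoc,
      ← ENNReal.ofReal_mul (le_of_lt hα), mul_comm]
  refine ⟨hmain, ?_⟩
  -- part 2 : equality of measures
  haveI : IsFiniteMeasure (τ.map Prod.snd) := Measure.isFiniteMeasure_map τ Prod.snd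
  refine Measure.ext_of_Iic _ _ fun y => ?_
  -- LHS
  have hLHS : (τ.map Prod.snd) (Iic y) = τ (Ici (0 : ℝ) ×ˢ Iic y) := by
    rw [Measure.map_apply measurable_snd measurableSet_Iic]
    apply le_antisymm
    · calc τ (Prod.snd ⁻¹' Iic y)
          ≤ τ ({p : ℝ × ℝ | p.1 < 0} ∪ Ici (0:ℝ) ×ˢ Iic y) := by
            refine measure_mono fun p hp => ?_
            rcases lt_or_ge p.1 0 with h | h
            · exact Or.inl h
            · exact Or.inr ⟨h, hp⟩
        _ ≤ τ {p : ℝ × ℝ | p.1 < 0} + τ (Ici (0:ℝ) ×ˢ Iic y) := measure_union_le _ _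
        _ = τ (Ici (0:ℝ) ×ˢ Iic y) := by rw [hτsupp, zero_add]
    · exact measure_mono fun p hp => hp.2
  rw [hLHS, hmain y]
  -- RHS
  have hadd : Measurable fun p : ℝ × ℝ => p.1 + p.2 := by fun_prop
  rw [Measure.map_apply hadd measurableSet_Iic,
    Measure.prod_apply_symm (hadd measurableSet_Iic)]
  have hpre : ∀ v : ℝ, (fun x : ℝ => (x, v)) ⁻¹' ((fun p : ℝ × ℝ => p.1 + p.2) ⁻¹' Iic y)
      = Iic (y - v) := by
    intro v; ext x
    simp [le_sub_iff_add_le]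
  have h3 : ∫⁻ v, lam ((fun x : ℝ => (x, v)) ⁻¹' ((fun p : ℝ × ℝ => p.1 + p.2) ⁻¹' Iic y))
        ∂(volume.withDensity fun u =>
          if u ≤ 0 then ENNReal.ofReal (α * Real.exp (α / z * u)) else 0)
      = ∫⁻ v, lam (Iic (y - v))
        ∂(volume.withDensity fun u =>
          if u ≤ 0 then ENNReal.ofReal (α * Real.exp (α / z * u)) else 0) := by
    exact lintegral_congr fun v => by rw [hpre]
  rw [h3]
  have hdens : Measurable fun u : ℝ =>
      if u ≤ 0 then ENNReal.ofReal (α * Real.exp (α / z * u)) else 0 := by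
    refine Measurable.ite measurableSet_Iic ?_ measurable_const
    fun_prop
  have hf : Measurable fun v : ℝ => lam (Iic (y - v)) := by
    have : Antitone fun v : ℝ => lam (Iic (y - v)) := fun a b hab =>
      measure_mono (Iic_subset_Iic.2 (by linarith))
    exact this.measurable
  rw [lintegral_withDensity_eq_lintegral_mul _ hdens hf]
  have h4 : ∀ v : ℝ,
      ((fun u : ℝ => if u ≤ 0 then ENNReal.ofReal (α * Real.exp (α / z * u)) else 0)
        * fun v => lam (Iic (y - v))) v
      = (Iic (0:ℝ)).indicator
          (fun v => lam (Iic (y - v)) * ENNReal.ofReal (α * Real.exp (α / z * v))) v := by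
    intro v
    by_cases h : v ≤ 0 <;> simp [indicator, h, mul_comm]
  rw [lintegral_congr h4, lintegral_indicator measurableSet_Iic]
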